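/- Let G be a finite group, O a transfer system on G, and M the maximal compatible transfer system of O. Then a transfer K → H ∈ O belongs to M if and only if for every proper subgroup I < H, the restricted transfer (K ∩ I) → I belongs to M and the restriction is a compatibility success, i.e., (K ∩ I) → K ∈ O implies I → H ∈ O. -/
import Mathlib


/-- A transfer system on a group `G`: a binary relation on subgroups refining
inclusion, which is reflexive, closed under conjugation, restriction, and
composition. -/
structure TransferSystem (G : Type*) [Group G] where
  rel : Subgroup G → Subgroup G → Prop
  le_of_rel : ∀ {K H : Subgroup G}, rel K H → K ≤ H
  refl : ∀ H : Subgroup G, rel H H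
  conj : ∀ {K H : Subgroup G} (g : G), rel K H →
    rel (K.map (MulAut.conj g).toMonoidHom) (H.map (MulAut.conj g).toMonoidHom)
  restrict : ∀ {K H : Subgroup G} (L : Subgroup G), rel K H → L ≤ H → rel (K ⊓ L) L
  comp : ∀ {L K H : Subgroup G}, rel L K → rel K H → rel L H

/-- The pair `(Oa, Om)` of transfer systems is compatible. -/
def TransferSystem.Compatible {G : Type*} [Group G] (Oa Om : TransferSystem G) : Prop :=
  (∀ K H : Subgroup G, Om.rel K H → Oa.rel K H) ∧
  ∀ K J H : Subgroup G, J ≤ H → Om.rel K H → Oa.rel (K ⊓ J) K → Oa.rel J H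

/-- `M` is the maximal compatible transfer system of `O`. -/
def TransferSystem.IsMaxCompatible {G : Type*} [Group G] (O M : TransferSystem G) : Prop :=
  O.Compatible M ∧
  ∀ Om : TransferSystem G, O.Compatible Om → ∀ K H : Subgroup G, Om.rel K H → M.rel K H

/-- `T` is the transfer system generated by the binary relation `B`, i.e. the
smallest transfer system containing `B`. -/
def TransferSystem.IsGeneratedBy {G : Type*} [Group G] (T : TransferSystem G)
    (B : Subgroup G → Subgroup G → Prop) : Prop :=
  (∀ K H : Subgroup G, B K H → T.rel K H) ∧
  ∀ T' : TransferSystem G, (∀ K H : Subgroup G, B K H → T'.rel K H) →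
    ∀ K H : Subgroup G, T.rel K H → T'.rel K H

/-- The single transfer `K → H` is compatible with `Oa`. -/
def TransferSystem.EdgeCompatible {G : Type*} [Group G] (Oa : TransferSystem G)
    (K H : Subgroup G) : Prop :=
  ∀ J : Subgroup G, J ≤ H → Oa.rel (K ⊓ J) K → Oa.rel J H

/-- A transfer system is saturated. -/
def TransferSystem.Saturated {G : Type*} [Group G] (O : TransferSystem G) : Prop :=
  ∀ L K H : Subgroup G, L ≤ K → K ≤ H → O.rel L H → O.rel K H

/-- A transfer system is disklike: every transfer is a restriction of a
transfer to the full group. -/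
def TransferSystem.Disklike {G : Type*} [Group G] (O : TransferSystem G) : Prop :=
  ∀ K H : Subgroup G, O.rel K H → ∃ L : Subgroup G, O.rel L ⊤ ∧ K = L ⊓ H

/-- `r` is a proper restriction of `e` in the restriction order on transfers,
viewed as pairs of subgroups. -/
def RestrLt {G : Type*} [Group G] (r e : Subgroup G × Subgroup G) : Prop :=
  ∃ I : Subgroup G, I < e.2 ∧ r = (e.1 ⊓ I, I)

/-- `r ≺ e`: `r` is covered by `e` in the restriction order on transfers of `O`. -/
def RestrCovBy {G : Type*} [Group G] (O : TransferSystem G)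
    (r e : Subgroup G × Subgroup G) : Prop :=
  RestrLt r e ∧
    ¬ ∃ q : Subgroup G × Subgroup G, O.rel q.1 q.2 ∧ RestrLt r q ∧ RestrLt q e

/-- The binary relation `p⁻¹O` on subgroups of `G`, for `O` a transfer system
on `G ⧸ N`. -/
def preimageRel {G : Type*} [Group G] (N : Subgroup G) [N.Normal]
    (O : TransferSystem (G ⧸ N)) : Subgroup G → Subgroup G → Prop :=
  fun A B => ∃ K H : Subgroup (G ⧸ N), O.rel K H ∧
    A = Subgroup.comap (QuotientGroup.mk' N) K ∧ B = Subgroup.comap (QuotientGroup.mk' N) H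

namespace Stmt6Aux


variable {G : Type*} [Group G]

abbrev cmap (g : G) (S : Subgroup G) : Subgroup G := S.map (MulAut.conj g).toMonoidHom

lemma conj_inj (g : G) : Function.Injective ((MulAut.conj g).toMonoidHom : G →* G) :=
  (MulAut.conj g).injective

lemma cmap_cmap (g g' : G) (S : Subgroup G) : cmap g' (cmap g S) = cmap (g' * g) S := by
  rw [cmap, cmap, Subgroup.map_map]
  congr 1
  ext x
  simp [MulAut.conj_apply, mul_assoc]

lemma cmap_one (S : Subgroup G) : cmap 1 S = S := by
  ext x
  simp [cmap, Subgroup.mem_map, MulAut.conj_apply]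

lemma cmap_inf (g : G) (S T : Subgroup G) : cmap g (S ⊓ T) = cmap g S ⊓ cmap g T :=
  Subgroup.map_inf S T _ (conj_inj g)

lemma cmap_le_iff {g : G} {S T : Subgroup G} : cmap g S ≤ cmap g T ↔ S ≤ T :=
  Subgroup.map_le_map_iff_of_injective (conj_inj g)

lemma cmap_lt_iff {g : G} {S T : Subgroup G} : cmap g S < cmap g T ↔ S < T := by
  simp [lt_iff_le_not_ge, cmap_le_iff]

lemma card_cmap (g : G) (S : Subgroup G) : Nat.card (cmap g S) = Nat.card S :=
  (Nat.card_congr (S.equivMapOfInjective _ (conj_inj g)).toEquiv).symm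

lemma map_eq_cmap (g : G) (S : Subgroup G) :
    Subgroup.map (MulAut.conj g).toMonoidHom S = cmap g S := rfl

variable {G : Type*} [Group G]

/-- The relation extending `M` by composites through conjugates of the edge `K → H`. -/
def extRel (M : TransferSystem G) (K H : Subgroup G) : Subgroup G → Subgroup G → Prop :=
  fun A B => M.rel A B ∨ ∃ g : G, M.rel A (cmap g K) ∧ M.rel (cmap g H) B

/-- Under the hypotheses of the backward direction, `extRel` is a transfer system. -/
def extSys [Finite G] (M : TransferSystem G) (K H : Subgroup G) (hle : K ≤ H)
    (hyp : ∀ g : G, ∀ I : Subgroup G, I < cmap g H → M.rel (cmap g K ⊓ I) I) :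
    TransferSystem G where
  rel := extRel M K H
  le_of_rel := by
    rintro A B (h | ⟨g, h1, h2⟩)
    · exact M.le_of_rel h
    · exact (M.le_of_rel h1).trans ((Subgroup.map_mono hle).trans (M.le_of_rel h2))
  refl := fun A => Or.inl (M.refl A)
  conj := by
    rintro A B g' (h | ⟨g, h1, h2⟩)
    · exact Or.inl (M.conj g' h)
    · refine Or.inr ⟨g' * g, ?_, ?_⟩
      · rw [← cmap_cmap]; exact M.conj g' h1
      · rw [← cmap_cmap]; exact M.conj g' h2
  restrict := by
    rintro A B J (h | ⟨g, h1, h2⟩) hJ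
    · exact Or.inl (M.restrict J h hJ)
    · have hAK : A ≤ cmap g K := M.le_of_rel h1
      have hKHg : cmap g K ≤ cmap g H := Subgroup.map_mono hle
      have hr : M.rel (cmap g H ⊓ J) J := M.restrict J h2 hJ
      by_cases hc : cmap g H ≤ J
      · have hA : A ⊓ J = A := inf_eq_left.mpr (hAK.trans (hKHg.trans hc))
        rw [hA]
        exact Or.inr ⟨g, h1, by rwa [inf_eq_left.mpr hc] at hr⟩
      · have hlt : cmap g H ⊓ J < cmap g H :=
          lt_of_le_of_ne inf_le_left (fun e => hc (inf_eq_left.mp e))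
        have h3 : M.rel (cmap g K ⊓ (cmap g H ⊓ J)) (cmap g H ⊓ J) := hyp g _ hlt
        have e3 : cmap g K ⊓ (cmap g H ⊓ J) = cmap g K ⊓ J := by
          rw [← inf_assoc, inf_eq_left.mpr hKHg]
        rw [e3] at h3
        have h4 : M.rel (A ⊓ (cmap g K ⊓ J)) (cmap g K ⊓ J) := M.restrict _ h1 inf_le_left
        have e4 : A ⊓ (cmap g K ⊓ J) = A ⊓ J := by
          rw [← inf_assoc, inf_eq_left.mpr hAK]
        rw [e4] at h4
        exact Or.inl (M.comp h4 (M.comp h3 hr))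
  comp := by
    rintro C A B (h | ⟨g, h1, h2⟩) (h' | ⟨g', h1', h2'⟩)
    · exact Or.inl (M.comp h h')
    · exact Or.inr ⟨g', M.comp h h1', h2'⟩
    · exact Or.inr ⟨g, h1, M.comp h2 h'⟩
    · have h5 : M.rel (cmap g H) (cmap g' K) := M.comp h2 h1'
      have hle1 : cmap g H ≤ cmap g' K := M.le_of_rel h5
      have hle2 : cmap g' K ≤ cmap g' H := Subgroup.map_mono hle
      have hcard : Nat.card (cmap g' K) ≤ Nat.card (cmap g H) := by
        calc Nat.card (cmap g' K) ≤ Nat.card (cmap g' H) := Subgroup.card_le_of_le hle2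
        _ = Nat.card (cmap g H) := by rw [card_cmap, card_cmap]
      have e1 : cmap g H = cmap g' K := Subgroup.eq_of_le_of_card_ge hle1 hcard
      have e2 : cmap g' K = cmap g' H := Subgroup.eq_of_le_of_card_ge hle2
        (le_of_eq (by rw [← e1, card_cmap, card_cmap]))
      rw [e2] at h5
      exact Or.inr ⟨g, h1, M.comp h5 h2'⟩

end Stmt6Aux

open Stmt6Aux

/-- a transfer `K → H ∈ O` belongs to the maximal compatible
transfer system `M` of `O` iff for every proper subgroup `I < H`, the
restriction `(K ∩ I) → I` belongs to `M` and is a compatibility success. -/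
theorem stmt_6 {G : Type*} [Group G] [Finite G] (O M : TransferSystem G)
    (hM : O.IsMaxCompatible M) (K H : Subgroup G) (hKH : O.rel K H) :
    M.rel K H ↔
      ∀ I : Subgroup G, I < H → M.rel (K ⊓ I) I ∧ (O.rel (K ⊓ I) K → O.rel I H) := by
  constructor
  · intro hMKH I hI
    exact ⟨M.restrict I hMKH hI.le, fun hO => hM.1.2 K I H hI.le hMKH hO⟩
  · intro hcond
    have hle : K ≤ H := O.le_of_rel hKH
    have hdeconj : ∀ g : G, ∀ I : Subgroup G, I < cmap g H → cmap g⁻¹ I < H := by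
      intro g I hI
      have h := (cmap_lt_iff (g := g⁻¹)).mpr hI
      rwa [cmap_cmap, inv_mul_cancel, cmap_one] at h
    have hreconj : ∀ g : G, ∀ I : Subgroup G, I ≤ cmap g H → cmap g (cmap g⁻¹ I) = I := by
      intro g I _
      rw [cmap_cmap, mul_inv_cancel, cmap_one]
    have hyp : ∀ g : G, ∀ I : Subgroup G, I < cmap g H → M.rel (cmap g K ⊓ I) I := by
      intro g I hI
      have h1 := (hcond _ (hdeconj g I hI)).1
      have h2 := M.conj g h1
      simp only [map_eq_cmap] at h2
      rwa [cmap_inf, hreconj g I hI.le] at h2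
    have hyp2 : ∀ g : G, ∀ J : Subgroup G, J ≤ cmap g H →
        O.rel (cmap g K ⊓ J) (cmap g K) → O.rel J (cmap g H) := by
      intro g J hJ hOr
      rcases eq_or_lt_of_le hJ with he | hlt
      · rw [he]; exact O.refl _
      · have h1 : O.rel (K ⊓ cmap g⁻¹ J) K := by
          have h := O.conj g⁻¹ hOr
          simp only [map_eq_cmap] at h
          rwa [cmap_inf, cmap_cmap, inv_mul_cancel, cmap_one] at h
        have h2 := (hcond _ (hdeconj g J hlt)).2 h1
        have h3 := O.conj g h2
        simp only [map_eq_cmap] at h3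
        rwa [hreconj g J hJ] at h3
    set Om := extSys M K H hle hyp with hOm
    have hcompat : O.Compatible Om := by
      constructor
      · rintro A B (h | ⟨g, h1, h2⟩)
        · exact hM.1.1 A B h
        · exact O.comp (hM.1.1 _ _ h1) (O.comp (O.conj g hKH) (hM.1.1 _ _ h2))
      · rintro A J B hJB (h | ⟨g, h1, h2⟩) hOA
        · exact hM.1.2 A J B hJB h hOA
        · have hAK : A ≤ cmap g K := M.le_of_rel h1
          have e : A ⊓ (cmap g K ⊓ J) = A ⊓ J := by
            rw [← inf_assoc, inf_eq_left.mpr hAK]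
          have s1 : O.rel (cmap g K ⊓ J) (cmap g K) :=
            hM.1.2 A (cmap g K ⊓ J) (cmap g K) inf_le_left h1 (by rw [e]; exact hOA)
          have e2 : cmap g K ⊓ (cmap g H ⊓ J) = cmap g K ⊓ J := by
            rw [← inf_assoc, inf_eq_left.mpr (Subgroup.map_mono hle)]
          have s2 : O.rel (cmap g H ⊓ J) (cmap g H) :=
            hyp2 g _ inf_le_left (by rw [e2]; exact s1)
          exact hM.1.2 (cmap g H) J B hJB h2 s2
    have hOmKH : Om.rel K H := by
      refine Or.inr ⟨1, ?_, ?_⟩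
      · rw [cmap_one]; exact M.refl K
      · rw [cmap_one]; exact M.refl H
    exact hM.2 Om hcompat K H hOmKH
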